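/- Let $N \in \{4,5,6\}$, $p = \frac{N+2}{N-2}$. For each $\gamma$ in a sequence tending to $+\infty$, let $u_\gamma$ be a radial sign-changing solution on $B_1 \subset \mathbb{R}^N$ of $-\Delta u = \lambda(\gamma)u + |u|^{p-1}u$ with exactly two nodal regions, $u_\gamma(0) = \|u_\gamma\|_\infty \to \infty$, and nodal radius $r_\gamma \to 0$. Assume that for each $\mu \in (0, \lambda_1(B_1))$ small, the positive radial solution of $-\Delta v = \mu v + v^p$ in $B_1$, $v = 0$ on $\partial B_1$, is unique and minimizes the energy $J_\mu$ over the Nehari manifold, and that the least energy $c_\mu \to \frac{1}{N}S^{N/2}$ as $\mu \to 0^+$. Then $J_{\lambda(\gamma)}(u_\gamma^+) \to \frac{1}{N}S^{N/2}$ as $\gamma \to \infty$, where $S$ is the best Sobolev constant for $\mathcal{D}^{1,2}(\mathbb{R}^N) \hookrightarrow L^{2^*}(\mathbb{R}^N)$. -/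

import Mathlib

open Real MeasureTheory Metric Set Filter

/-- The Laplacian of `f : ℝ^N → ℝ`, as the sum of the second derivatives along the
coordinate directions. -/
noncomputable def lap {N : ℕ} (f : EuclideanSpace ℝ (Fin N) → ℝ)
    (x : EuclideanSpace ℝ (Fin N)) : ℝ :=
  ∑ i : Fin N, iteratedDeriv 2 (fun s : ℝ => f (x + s • EuclideanSpace.single i 1)) 0

/-- The energy functional `J_μ(v) = ½∫_{B₁}(|∇v|² - μ v²) - (1/2*)∫_{B₁}|v|^{2*}`,
with `2* = 2N/(N-2)`. -/
noncomputable def energy (N : ℕ) (μ : ℝ) (v : EuclideanSpace ℝ (Fin N) → ℝ) : ℝ :=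
  (1 / 2) * (∫ x in ball (0 : EuclideanSpace ℝ (Fin N)) 1,
      (‖gradient v x‖ ^ 2 - μ * (v x) ^ 2)) -
    (1 / (2 * (N : ℝ) / ((N : ℝ) - 2))) *
      ∫ x in ball (0 : EuclideanSpace ℝ (Fin N)) 1, |v x| ^ (2 * (N : ℝ) / ((N : ℝ) - 2))




-- second derivative of s ↦ G(√(ρ²+s²)) at 0
theorem secondDeriv_tangential {G : ℝ → ℝ} (hG : ContDiff ℝ 2 G) {ρ : ℝ} (hρ : 0 < ρ) :
    iteratedDeriv 2 (fun s => G (Real.sqrt (ρ^2 + s^2))) 0 = deriv G ρ / ρ := by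
  set q : ℝ → ℝ := fun s => Real.sqrt (ρ^2 + s^2) with hq
  have hqpos : ∀ s, 0 < q s := fun s =>
    Real.sqrt_pos.2 (by positivity)
  have hq0 : q 0 = ρ := by simp [hq, Real.sqrt_sq hρ.le]
  have hGdiff : Differentiable ℝ G := hG.differentiable two_ne_zero
  have hG' : ContDiff ℝ 1 (deriv G) := by
    rw [show (2 : WithTop ℕ∞) = 1 + 1 from rfl, contDiff_succ_iff_deriv] at hG
    exact hG.2.2
  have hqd : ∀ s, HasDerivAt q (s / q s) s := by
    intro s
    have h1 : HasDerivAt (fun s : ℝ => ρ^2 + s^2) (2*s) s := by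
      simpa using (hasDerivAt_pow 2 s).const_add (ρ^2)
    have h2 := (Real.hasDerivAt_sqrt (by positivity : ρ^2 + s^2 ≠ 0)).comp s h1
    refine h2.congr_deriv ?_
    rw [hq]
    field_simp
  have hwd : ∀ s, HasDerivAt (fun s => G (q s)) (deriv G (q s) * (s / q s)) s := by
    intro s
    exact ((hGdiff (q s)).hasDerivAt).comp s (hqd s)
  have hderiv1 : deriv (fun s => G (q s)) = fun s => deriv G (q s) * (s / q s) :=
    funext fun s => (hwd s).deriv
  have hA : HasDerivAt (fun s => deriv G (q s)) (deriv (deriv G) ρ * (0 / q 0)) 0 := by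
    have := ((hG'.differentiable one_ne_zero (q 0)).hasDerivAt).comp 0 (hqd 0)
    simpa [Function.comp_def] using this
  have hB : HasDerivAt (fun s : ℝ => s / q s) (1 / ρ) 0 := by
    have := (hasDerivAt_id 0).div (hqd 0) (hqpos 0).ne'
    refine this.congr_deriv ?_
    rw [hq0]
    field_simp
    ring
  have hF : HasDerivAt (fun s => deriv G (q s) * (s / q s))
      (deriv (deriv G) ρ * (0 / q 0) * (0 / q 0) + deriv G (q 0) * (1/ρ)) 0 := hA.mul hB
  have : deriv (fun s => deriv G (q s) * (s / q s)) 0 = deriv G ρ / ρ := by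
    rw [hF.deriv, hq0]
    field_simp
    ring
  rw [iteratedDeriv_succ, iteratedDeriv_one, hderiv1, this]

theorem secondDeriv_shift {G : ℝ → ℝ} (hG : ContDiff ℝ 2 G) (ρ : ℝ) :
    iteratedDeriv 2 (fun s => G (ρ + s)) 0 = deriv (deriv G) ρ := by
  have hGdiff : Differentiable ℝ G := hG.differentiable two_ne_zero
  have h1 : deriv (fun s => G (ρ + s)) = fun s => deriv G (ρ + s) := by
    funext s
    exact (((hGdiff (ρ+s)).hasDerivAt).comp s
      (by simpa using (hasDerivAt_id s).const_add ρ)).deriv.trans (by simp)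
  have hG' : Differentiable ℝ (deriv G) := by
    rw [show (2 : WithTop ℕ∞) = 1 + 1 from rfl, contDiff_succ_iff_deriv] at hG
    exact hG.2.2.differentiable one_ne_zero
  have h2 : deriv (fun s => deriv G (ρ + s)) 0 = deriv (deriv G) ρ := by
    have := ((hG' (ρ+0)).hasDerivAt).comp 0
      (by simpa using (hasDerivAt_id (0:ℝ)).const_add ρ)
    simpa [Function.comp_def] using this.deriv
  rw [iteratedDeriv_succ, iteratedDeriv_one, h1, h2]

theorem sturm {z z' z'' : ℝ → ℝ} {a b K : ℝ} (hab : a < b) (hK : 0 < K)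
    (hz : ∀ ρ ∈ Ioo a b, HasDerivAt z (z' ρ) ρ)
    (hz' : ∀ ρ ∈ Ioo a b, HasDerivAt z' (z'' ρ) ρ)
    (hpos : ∀ ρ ∈ Ioo a b, 0 < z ρ)
    (hineq : ∀ ρ ∈ Ioo a b, z'' ρ ≤ -K^2 * z ρ)
    (hlen : π / K < b - a) : False := by
  have hπK : 0 < π / K := div_pos Real.pi_pos hK
  set a' : ℝ := a + (b - a - π / K) / 2 with ha'
  set c : ℝ := a' + π / K with hc
  have haa' : a < a' := by
    rw [ha']; nlinarith
  have hcb : c < b := by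
    rw [hc, ha']; nlinarith
  have ha'c : a' < c := by rw [hc]; linarith
  have hsub : Icc a' c ⊆ Ioo a b := fun x hx => ⟨lt_of_lt_of_le haa' hx.1, lt_of_le_of_lt hx.2 hcb⟩
  set W : ℝ → ℝ := fun ρ => z' ρ * Real.sin (K * (ρ - a')) - K * Real.cos (K * (ρ - a')) * z ρ
    with hW
  have hWd : ∀ ρ ∈ Ioo a b, HasDerivAt W
      (z'' ρ * Real.sin (K * (ρ - a')) + K^2 * Real.sin (K * (ρ - a')) * z ρ) ρ := by
    intro ρ hρ
    have harg : HasDerivAt (fun ρ : ℝ => K * (ρ - a')) K ρ := by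
      simpa using ((hasDerivAt_id ρ).sub_const a').const_mul K
    have hsin : HasDerivAt (fun ρ : ℝ => Real.sin (K * (ρ - a')))
        (Real.cos (K * (ρ - a')) * K) ρ := (Real.hasDerivAt_sin _).comp ρ harg
    have hcos : HasDerivAt (fun ρ : ℝ => Real.cos (K * (ρ - a')))
        (-Real.sin (K * (ρ - a')) * K) ρ := (Real.hasDerivAt_cos _).comp ρ harg
    have := ((hz' ρ hρ).fun_mul hsin).sub (((hcos.const_mul K).fun_mul (hz ρ hρ)))
    refine this.congr_deriv ?_
    ring
  have hmono : AntitoneOn W (Icc a' c) := by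
    apply antitoneOn_of_deriv_nonpos (convex_Icc a' c)
    · exact fun x hx => ((hWd x (hsub hx)).continuousAt).continuousWithinAt
    · intro x hx
      rw [interior_Icc] at hx
      exact (hWd x (hsub (Ioo_subset_Icc_self hx))).differentiableAt.differentiableWithinAt
    · intro x hx
      rw [interior_Icc] at hx
      rw [(hWd x (hsub (Ioo_subset_Icc_self hx))).deriv]
      have hsin_nonneg : 0 ≤ Real.sin (K * (x - a')) := by
        apply Real.sin_nonneg_of_nonneg_of_le_pi
        · have : 0 < x - a' := by linarith [hx.1]
          positivity
        · have : x - a' ≤ π / K := by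
            have := hx.2; rw [hc] at this; linarith
          calc K * (x - a') ≤ K * (π / K) := by
                exact mul_le_mul_of_nonneg_left this hK.le
            _ = π := by field_simp
      have h1 : z'' x * Real.sin (K * (x - a')) ≤ -K^2 * z x * Real.sin (K * (x - a')) :=
        mul_le_mul_of_nonneg_right (hineq x (hsub (Ioo_subset_Icc_self hx))) hsin_nonneg
      nlinarith [h1]
  have hWa' : W a' = -K * z a' := by
    rw [hW]; simp
  have hWc : W c = K * z c := by
    have harg : K * (c - a') = π := by rw [hc]; field_simp; ring
    rw [hW]
    simp only [harg, Real.sin_pi, Real.cos_pi]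
    ring
  have hza' : 0 < z a' := hpos a' (hsub ⟨le_refl a', ha'c.le⟩)
  have hzc : 0 < z c := hpos c (hsub ⟨ha'c.le, le_refl c⟩)
  have := hmono (⟨le_refl a', ha'c.le⟩ : a' ∈ Icc a' c) (⟨ha'c.le, le_refl c⟩ : c ∈ Icc a' c) ha'c.le
  rw [hWa', hWc] at this
  nlinarith

theorem secondDeriv_scale {φ : ℝ → ℝ} (hφ : ContDiff ℝ 2 φ) (c r : ℝ) :
    iteratedDeriv 2 (fun s => c * φ (r * s)) 0 = c * r^2 * iteratedDeriv 2 φ 0 := by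
  have hφr : ContDiff ℝ 2 (fun s : ℝ => φ (r * s)) :=
    hφ.comp (contDiff_const.mul contDiff_id)
  have h1 : iteratedDeriv 2 (fun s => c * φ (r * s)) 0
      = c * iteratedDeriv 2 (fun s => φ (r * s)) 0 := by
    rw [← iteratedDerivWithin_univ, ← iteratedDerivWithin_univ]
    exact iteratedDerivWithin_const_mul (mem_univ (0:ℝ)) uniqueDiffOn_univ c hφr.contDiffWithinAt
  have h2 : iteratedDeriv 2 (fun s => φ (r * s)) 0 = r^2 * iteratedDeriv 2 φ (r * 0) := by
    rw [iteratedDeriv_comp_const_mul hφ r]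
  rw [h1, h2, mul_zero]
  ring

theorem lap_scale {N : ℕ} {f : EuclideanSpace ℝ (Fin N) → ℝ} (hf : ContDiff ℝ 2 f)
    (c r : ℝ) (y : EuclideanSpace ℝ (Fin N)) :
    lap (fun x => c * f (r • x)) y = c * r^2 * lap f (r • y) := by
  rw [lap, lap, Finset.mul_sum]
  apply Finset.sum_congr rfl
  intro i _
  have hout : ∀ s : ℝ, c * f (r • (y + s • EuclideanSpace.single i 1))
      = c * (fun t => f (r • y + t • EuclideanSpace.single i 1)) (r * s) := by
    intro s
    congr 1
    rw [smul_add, smul_smul]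
  have hφ : ContDiff ℝ 2 (fun t : ℝ => f (r • y + t • EuclideanSpace.single i 1)) := by
    apply hf.comp
    exact contDiff_const.add (contDiff_id.smul contDiff_const)
  calc iteratedDeriv 2 (fun s : ℝ => c * f (r • (y + s • EuclideanSpace.single i 1))) 0
      = iteratedDeriv 2 (fun s : ℝ =>
          c * (fun t => f (r • y + t • EuclideanSpace.single i 1)) (r * s)) 0 := by
        congr 1; funext s; exact hout s
    _ = c * r^2 * iteratedDeriv 2 (fun t : ℝ => f (r • y + t • EuclideanSpace.single i 1)) 0 :=
        secondDeriv_scale hφ c r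

theorem nodal_zero {N : ℕ} (hN : 0 < N) {f : EuclideanSpace ℝ (Fin N) → ℝ}
    (hf : Continuous f)
    (hrad : ∀ x y : EuclideanSpace ℝ (Fin N), ‖x‖ = ‖y‖ → f x = f y)
    {r : ℝ} (hr0 : 0 < r) (hr1 : r < 1)
    (hpos : ∀ x : EuclideanSpace ℝ (Fin N), ‖x‖ < r → 0 < f x)
    (hneg : ∀ x : EuclideanSpace ℝ (Fin N), r < ‖x‖ → ‖x‖ < 1 → f x < 0)
    (x : EuclideanSpace ℝ (Fin N)) (hx : ‖x‖ = r) : f x = 0 := by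
  set i₀ : Fin N := ⟨0, hN⟩
  set g : ℝ → ℝ := fun t => f (t • EuclideanSpace.single i₀ 1) with hg
  have hnorm : ∀ t : ℝ, 0 ≤ t → ‖t • EuclideanSpace.single i₀ (1:ℝ)‖ = t := by
    intro t ht
    rw [norm_smul, EuclideanSpace.norm_single, norm_one, mul_one, Real.norm_eq_abs,
      abs_of_nonneg ht]
  have hfx : f x = g r := hrad _ _ (by rw [hx, hnorm r hr0.le])
  have hgc : ContinuousAt g r := (hf.comp (continuous_id.smul continuous_const)).continuousAt
  have hge : 0 ≤ g r := by
    have htend : Tendsto g (nhdsWithin r (Iio r)) (nhds (g r)) :=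
      hgc.continuousWithinAt.tendsto
    refine ge_of_tendsto htend ?_
    filter_upwards [Ioo_mem_nhdsLT_of_mem (⟨hr0, le_refl r⟩ : r ∈ Ioc 0 r)] with t ht
    exact (hpos _ (by rw [hnorm t ht.1.le]; exact ht.2)).le
  have hle : g r ≤ 0 := by
    have htend : Tendsto g (nhdsWithin r (Ioi r)) (nhds (g r)) :=
      hgc.continuousWithinAt.tendsto
    refine le_of_tendsto htend ?_
    filter_upwards [Ioo_mem_nhdsGT_of_mem (⟨le_refl r, hr1⟩ : r ∈ Ico r 1)] with t ht
    have ht0 : (0:ℝ) ≤ t := le_trans hr0.le ht.1.le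
    exact (hneg _ (by rw [hnorm t ht0]; exact ht.1) (by rw [hnorm t ht0]; exact ht.2)).le
  rw [hfx]
  linarith

variable {N : ℕ}

-- integral over unit ball of a function vanishing on the annulus r < ‖x‖ < 1
theorem setIntegral_shrink (F : EuclideanSpace ℝ (Fin N) → ℝ) {r : ℝ} (hr0 : 0 < r)
    (hr1 : r < 1) (hvanish : ∀ x : EuclideanSpace ℝ (Fin N), r < ‖x‖ → ‖x‖ < 1 → F x = 0) :
    ∫ x in ball (0 : EuclideanSpace ℝ (Fin N)) 1, F x
      = ∫ x in ball (0 : EuclideanSpace ℝ (Fin N)) r, F x := by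
  have hsphere : volume (sphere (0 : EuclideanSpace ℝ (Fin N)) r) = 0 :=
    Measure.addHaar_sphere_of_ne_zero _ _ hr0.ne'
  have hae : ∀ᵐ x ∂volume, x ∈ ball (0 : EuclideanSpace ℝ (Fin N)) 1 →
      F x = (ball (0 : EuclideanSpace ℝ (Fin N)) r).indicator F x := by
    filter_upwards [measure_eq_zero_iff_ae_notMem.1 hsphere] with x hx hx1
    rw [mem_sphere_zero_iff_norm] at hx
    rw [mem_ball_zero_iff] at hx1
    rcases lt_trichotomy ‖x‖ r with h | h | h
    · rw [indicator_of_mem (mem_ball_zero_iff.2 h)]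
    · exact absurd h hx
    · rw [indicator_of_notMem (fun hc => absurd (mem_ball_zero_iff.1 hc) (not_lt.2 h.le)),
        hvanish x h hx1]
  rw [setIntegral_congr_ae measurableSet_ball hae, setIntegral_indicator measurableSet_ball,
    inter_eq_self_of_subset_right (ball_subset_ball hr1.le)]

-- change of variables for set integrals over balls
theorem setIntegral_ball_smul (F : EuclideanSpace ℝ (Fin N) → ℝ) {r : ℝ} (hr : 0 < r) :
    ∫ y in ball (0 : EuclideanSpace ℝ (Fin N)) 1, ((r:ℝ)^(N:ℕ)) * F (r • y)
      = ∫ x in ball (0 : EuclideanSpace ℝ (Fin N)) r, F x := by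
  rw [MeasureTheory.integral_const_mul]
  rw [Measure.setIntegral_comp_smul_of_pos volume F (ball (0 : EuclideanSpace ℝ (Fin N)) 1) hr]
  rw [smul_unitBall_of_pos hr, finrank_euclideanSpace_fin]
  rw [smul_eq_mul, ← mul_assoc, mul_inv_cancel₀ (by positivity), one_mul]

-- gradient of scaled composition
theorem gradient_scale (f : EuclideanSpace ℝ (Fin N) → ℝ) (hf : Differentiable ℝ f)
    (a r : ℝ) (y : EuclideanSpace ℝ (Fin N)) :
    gradient (fun x => a * f (r • x)) y = (a * r) • gradient f (r • y) := by
  have hsm : HasFDerivAt (fun x : EuclideanSpace ℝ (Fin N) => r • x)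
      (r • ContinuousLinearMap.id ℝ (EuclideanSpace ℝ (Fin N))) y :=
    (ContinuousLinearMap.id ℝ _).hasFDerivAt.const_smul r
  have hcomp := ((hf (r • y)).hasFDerivAt.comp y hsm).const_mul a
  have heq : a • ((fderiv ℝ f (r • y)).comp
        (r • ContinuousLinearMap.id ℝ (EuclideanSpace ℝ (Fin N))))
      = (a * r) • fderiv ℝ f (r • y) := by
    ext w
    simp [mul_comm, mul_assoc, mul_left_comm]
  rw [heq] at hcomp
  have hcomp' : HasFDerivAt (fun x => a * f (r • x)) ((a * r) • fderiv ℝ f (r • y)) y := hcomp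
  unfold gradient
  rw [hcomp'.fderiv, _root_.map_smul]
theorem lam_bound {h h' h'' : ℝ → ℝ} {A lam q : ℝ} (hA : 3 ≤ A) (hlam : 0 < lam)
    (hd1 : ∀ ρ ∈ Ioo (1/2:ℝ) 1, HasDerivAt h (h' ρ) ρ)
    (hd2 : ∀ ρ ∈ Ioo (1/2:ℝ) 1, HasDerivAt h' (h'' ρ) ρ)
    (hpos : ∀ ρ ∈ Ioo (1/2:ℝ) 1, 0 < h ρ)
    (hODE : ∀ ρ ∈ Ioo (1/2:ℝ) 1, h'' ρ + A * (h' ρ / ρ) + lam * h ρ + (h ρ) ^ q = 0) :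
    lam ≤ A^2 + 4*π^2 + 1 := by
  by_contra hcon
  push_neg at hcon
  set m : ℝ := A / 2 with hm
  have hm1 : 1 ≤ m := by rw [hm]; linarith
  have hmm : 0 < m * (m - 1) ∨ True := Or.inr trivial
  set z : ℝ → ℝ := fun ρ => ρ ^ m * h ρ with hz
  set z' : ℝ → ℝ := fun ρ => m * ρ ^ (m-1) * h ρ + ρ ^ m * h' ρ with hz'
  set z'' : ℝ → ℝ := fun ρ =>
    m * (m-1) * ρ ^ (m-2) * h ρ + 2 * m * ρ ^ (m-1) * h' ρ + ρ ^ m * h'' ρ with hz''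
  have hρfact : ∀ ρ : ℝ, ρ ∈ Ioo (1/2:ℝ) 1 → 0 < ρ := fun ρ hρ => by
    have := hρ.1; linarith
  have hdz : ∀ ρ ∈ Ioo (1/2:ℝ) 1, HasDerivAt z (z' ρ) ρ := by
    intro ρ hρ
    have hρ0 : ρ ≠ 0 := (hρfact ρ hρ).ne'
    have h1 : HasDerivAt (fun x : ℝ => x ^ m) (m * ρ ^ (m-1)) ρ := by
      simpa [mul_comm] using Real.hasDerivAt_rpow_const (x := ρ) (p := m) (Or.inl hρ0)
    simpa [hz, hz'] using h1.fun_mul (hd1 ρ hρ)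
  have hdz' : ∀ ρ ∈ Ioo (1/2:ℝ) 1, HasDerivAt z' (z'' ρ) ρ := by
    intro ρ hρ
    have hρ0 : ρ ≠ 0 := (hρfact ρ hρ).ne'
    have h1 : HasDerivAt (fun x : ℝ => x ^ (m-1)) ((m-1) * ρ ^ (m-1-1)) ρ := by
      simpa [mul_comm] using Real.hasDerivAt_rpow_const (x := ρ) (p := m-1) (Or.inl hρ0)
    have h2 : HasDerivAt (fun x : ℝ => x ^ m) (m * ρ ^ (m-1)) ρ := by
      simpa [mul_comm] using Real.hasDerivAt_rpow_const (x := ρ) (p := m) (Or.inl hρ0)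
    have hfull := ((h1.const_mul m).fun_mul (hd1 ρ hρ)).add (h2.fun_mul (hd2 ρ hρ))
    have : m - 1 - 1 = m - 2 := by ring
    rw [this] at hfull
    refine hfull.congr_deriv ?_
    rw [hz'']
    ring
  have hzpos : ∀ ρ ∈ Ioo (1/2:ℝ) 1, 0 < z ρ := by
    intro ρ hρ
    exact mul_pos (Real.rpow_pos_of_pos (hρfact ρ hρ) m) (hpos ρ hρ)
  -- the key inequality
  set K : ℝ := Real.sqrt (lam - 4 * (m * (m-1))) with hK
  have hKsq : K^2 = lam - 4 * (m * (m-1)) := by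
    rw [hK, Real.sq_sqrt]; nlinarith
  have hKpos : 0 < K := by
    rw [hK]; apply Real.sqrt_pos.2; nlinarith
  have hineq : ∀ ρ ∈ Ioo (1/2:ℝ) 1, z'' ρ ≤ -K^2 * z ρ := by
    intro ρ hρ
    have hρpos : 0 < ρ := hρfact ρ hρ
    have hρ0 : ρ ≠ 0 := hρpos.ne'
    have hODEρ := hODE ρ hρ
    have hsub : ρ ^ m * h'' ρ = -A * ρ ^ (m-1) * h' ρ - lam * ρ ^ m * h ρ - ρ ^ m * (h ρ) ^ q := by
      have hrm1 : ρ ^ (m-1) = ρ ^ m / ρ := by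
        rw [Real.rpow_sub_one hρ0]
      have : h'' ρ = -A * (h' ρ / ρ) - lam * h ρ - (h ρ) ^ q := by linarith
      rw [this, hrm1]
      field_simp
    have h2m : 2 * m = A := by rw [hm]; ring
    have hz''eq : z'' ρ = m * (m-1) * ρ ^ (m-2) * h ρ - lam * ρ ^ m * h ρ - ρ ^ m * (h ρ) ^ q := by
      rw [hz'']
      beta_reduce
      rw [hsub, ← h2m]
      ring
    have hrm2 : ρ ^ (m-2) ≤ 4 * ρ ^ m := by
      have e1 : ρ ^ (m-2) = ρ ^ m / ρ ^ (2:ℝ) := by rw [Real.rpow_sub hρpos]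
      have e2 : ρ ^ (2:ℝ) = ρ^2 := by
        rw [show ((2:ℝ) = ((2:ℕ):ℝ)) by norm_num, Real.rpow_natCast]
      rw [e1, e2, div_le_iff₀ (by positivity)]
      have h4 : 1 ≤ 4 * ρ^2 := by nlinarith [hρ.1]
      nlinarith [Real.rpow_pos_of_pos hρpos m]
    have hKz : -K^2 * z ρ = (4 * (m * (m-1)) - lam) * (ρ ^ m * h ρ) := by
      rw [hKsq, hz]; ring
    rw [hz''eq, hKz]
    have hhq : 0 < (h ρ) ^ q := Real.rpow_pos_of_pos (hpos ρ hρ) q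
    have hPpos : 0 < ρ ^ m := Real.rpow_pos_of_pos hρpos m
    have hHpos : 0 < h ρ := hpos ρ hρ
    have hmn : (0:ℝ) ≤ m * (m-1) := by nlinarith
    have hbound : m * (m-1) * ρ ^ (m-2) * h ρ ≤ 4 * (m * (m-1)) * ρ ^ m * h ρ := by
      have h1 : m * (m-1) * ρ ^ (m-2) ≤ m * (m-1) * (4 * ρ ^ m) :=
        mul_le_mul_of_nonneg_left hrm2 hmn
      have h2 := mul_le_mul_of_nonneg_right h1 hHpos.le
      linarith
    have hPq : 0 < ρ ^ m * (h ρ) ^ q := mul_pos hPpos hhq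
    linarith
  have hlen : π / K < 1 - 1/2 := by
    have h2π : 2 * π < K := by
      have : (2*π)^2 < lam - 4 * (m * (m-1)) := by nlinarith [Real.pi_pos]
      have := Real.lt_sqrt (by positivity : (0:ℝ) ≤ 2*π) |>.2 this
      rwa [← hK] at this
    rw [div_lt_iff₀ hKpos]
    nlinarith [Real.pi_pos]
  exact sturm (by norm_num : (1/2:ℝ) < 1) hKpos hdz hdz' hzpos hineq hlen
theorem norm_smul_single {N : ℕ} (i : Fin N) (t : ℝ) :
    ‖t • EuclideanSpace.single i (1:ℝ)‖ = |t| := by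
  rw [norm_smul, EuclideanSpace.norm_single]
  simp [Real.norm_eq_abs]

theorem norm_smul_single_add {N : ℕ} (i j : Fin N) (hij : i ≠ j) (a s : ℝ) :
    ‖a • EuclideanSpace.single i (1:ℝ) + s • EuclideanSpace.single j (1:ℝ)‖
      = Real.sqrt (a^2 + s^2) := by
  have h1 : ‖a • EuclideanSpace.single i (1:ℝ) + s • EuclideanSpace.single j (1:ℝ)‖^2
      = a^2 + s^2 := by
    rw [norm_add_sq_real]
    have hinner : inner ℝ (a • EuclideanSpace.single i (1:ℝ))
        (s • EuclideanSpace.single j (1:ℝ)) = (0:ℝ) := by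
      rw [real_inner_smul_left, real_inner_smul_right, EuclideanSpace.inner_single_left]
      simp [EuclideanSpace.single_apply, hij]
    rw [hinner, norm_smul, norm_smul, EuclideanSpace.norm_single]
    simp [Real.norm_eq_abs, mul_pow, sq_abs]
  rw [← h1, Real.sqrt_sq (norm_nonneg _)]

section radial
variable {N : ℕ} (hN : 0 < N) (f : EuclideanSpace ℝ (Fin N) → ℝ)

theorem g_contDiff (hf : ContDiff ℝ 2 f) :
    ContDiff ℝ 2 (fun t : ℝ => f (t • EuclideanSpace.single (⟨0, hN⟩ : Fin N) 1)) :=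
  hf.comp (contDiff_id.smul contDiff_const)

theorem lap_radial (hf : ContDiff ℝ 2 f)
    (hrad : ∀ x y : EuclideanSpace ℝ (Fin N), ‖x‖ = ‖y‖ → f x = f y)
    {ρ : ℝ} (hρ : 0 < ρ) :
    lap f (ρ • EuclideanSpace.single (⟨0, hN⟩ : Fin N) 1)
      = deriv (deriv (fun t : ℝ => f (t • EuclideanSpace.single (⟨0, hN⟩ : Fin N) 1))) ρ
        + ((N:ℝ) - 1) *
          (deriv (fun t : ℝ => f (t • EuclideanSpace.single (⟨0, hN⟩ : Fin N) 1)) ρ / ρ) := by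
  set i₀ : Fin N := ⟨0, hN⟩
  set g : ℝ → ℝ := fun t => f (t • EuclideanSpace.single i₀ 1) with hgdef
  have hg : ContDiff ℝ 2 g := g_contDiff hN f hf
  have hterm : ∀ i : Fin N,
      iteratedDeriv 2 (fun s : ℝ =>
        f (ρ • EuclideanSpace.single i₀ 1 + s • EuclideanSpace.single i 1)) 0
      = if i = i₀ then deriv (deriv g) ρ else deriv g ρ / ρ := by
    intro i
    by_cases hi : i = i₀
    · rw [if_pos hi, hi]
      have : (fun s : ℝ => f (ρ • EuclideanSpace.single i₀ 1 + s • EuclideanSpace.single i₀ 1))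
          = fun s => g (ρ + s) := by
        funext s
        rw [hgdef]
        congr 1
        rw [add_smul]
      rw [this]
      exact secondDeriv_shift hg ρ
    · rw [if_neg hi]
      have : (fun s : ℝ => f (ρ • EuclideanSpace.single i₀ 1 + s • EuclideanSpace.single i 1))
          = fun s => g (Real.sqrt (ρ^2 + s^2)) := by
        funext s
        rw [hgdef]
        apply hrad
        rw [norm_smul_single_add i₀ i (fun h => hi h.symm) ρ s, norm_smul_single]
        rw [abs_of_nonneg (Real.sqrt_nonneg _)]
      rw [this]
      exact secondDeriv_tangential hg hρ
  rw [lap]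
  rw [Finset.sum_congr rfl (fun i _ => hterm i)]
  rw [← Finset.add_sum_erase _ _ (Finset.mem_univ i₀), if_pos rfl]
  congr 1
  rw [Finset.sum_congr rfl (fun i hi => if_neg (Finset.ne_of_mem_erase hi))]
  rw [Finset.sum_const, Finset.card_erase_of_mem (Finset.mem_univ i₀), Finset.card_univ,
    Fintype.card_fin, nsmul_eq_mul, Nat.cast_sub hN]
  norm_num

theorem stmt16 (N : ℕ) (hN : N = 4 ∨ N = 5 ∨ N = 6)
    (p : ℝ) (hp : p = ((N : ℝ) + 2) / ((N : ℝ) - 2))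
    (γ lam r : ℕ → ℝ) (hγ : Tendsto γ atTop atTop)
    (hlampos : ∀ n, 0 < lam n)
    (hrio : ∀ n, r n ∈ Set.Ioo (0 : ℝ) 1) (hr0 : Tendsto r atTop (nhds 0))
    (u : ℕ → EuclideanSpace ℝ (Fin N) → ℝ)
    (hreg : ∀ n, ContDiff ℝ 2 (u n))
    (hrad : ∀ n, ∀ x y : EuclideanSpace ℝ (Fin N), ‖x‖ = ‖y‖ → u n x = u n y)
    (hsol : ∀ n, ∀ x ∈ ball (0 : EuclideanSpace ℝ (Fin N)) 1,
      -lap (u n) x = lam n * u n x + |u n x| ^ (p - 1) * u n x)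
    (hbd : ∀ n, ∀ x : EuclideanSpace ℝ (Fin N), ‖x‖ = 1 → u n x = 0)
    (hpos : ∀ n, ∀ x : EuclideanSpace ℝ (Fin N), ‖x‖ < r n → 0 < u n x)
    (hneg : ∀ n, ∀ x : EuclideanSpace ℝ (Fin N), r n < ‖x‖ → ‖x‖ < 1 → u n x < 0)
    (hmax : ∀ n, ∀ x : EuclideanSpace ℝ (Fin N), |u n x| ≤ u n 0)
    (hinf : Tendsto (fun n => u n 0) atTop atTop)
    (S : ℝ) (hS : 0 < S)
    (c : ℝ → ℝ) (ε : ℝ) (hε : 0 < ε)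
    -- uniqueness/least-energy hypothesis: for `μ > 0` small every positive radial
    -- solution of `-Δv = μ v + v^p` in `B₁` with zero boundary values has energy `c μ`
    (hmin : ∀ μ : ℝ, 0 < μ → μ < ε → ∀ v : EuclideanSpace ℝ (Fin N) → ℝ,
      ContDiff ℝ 2 v → (∀ x y : EuclideanSpace ℝ (Fin N), ‖x‖ = ‖y‖ → v x = v y) →
      (∀ x ∈ ball (0 : EuclideanSpace ℝ (Fin N)) 1, 0 < v x) →
      (∀ x : EuclideanSpace ℝ (Fin N), ‖x‖ = 1 → v x = 0) →
      (∀ x ∈ ball (0 : EuclideanSpace ℝ (Fin N)) 1, -lap v x = μ * v x + (v x) ^ p) →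
      energy N μ v = c μ)
    (hc : Tendsto c (nhdsWithin 0 (Set.Ioi 0)) (nhds ((1 / (N : ℝ)) * S ^ ((N : ℝ) / 2)))) :
    Tendsto (fun n => energy N (lam n) (fun x => max (u n x) 0)) atTop
      (nhds ((1 / (N : ℝ)) * S ^ ((N : ℝ) / 2))) := by
  have hN4 : 4 ≤ N := by rcases hN with h|h|h <;> omega
  have hN0 : 0 < N := by omega
  have hNR : (4:ℝ) ≤ (N:ℝ) := by exact_mod_cast hN4
  set Λ : ℝ := ((N:ℝ)-1)^2 + 4*π^2 + 1 with hΛdef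
  have hΛpos : 0 < Λ := by rw [hΛdef]; nlinarith [Real.pi_pos]
  set μseq : ℕ → ℝ := fun n => lam n * (r n)^2 with hμseq
  have hμpos : ∀ n, 0 < μseq n := fun n => mul_pos (hlampos n) (by nlinarith [(hrio n).1])
  -- the bound on lam
  have hlam_le : ∀ n, r n < 1/2 → lam n ≤ Λ := by
    intro n hrn
    set g : ℝ → ℝ := fun t => u n (t • EuclideanSpace.single (⟨0, hN0⟩ : Fin N) 1) with hgdef
    have hg : ContDiff ℝ 2 g := (hreg n).comp (contDiff_id.smul contDiff_const)
    have hgdiff : Differentiable ℝ g := hg.differentiable two_ne_zero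
    have hg'diff : Differentiable ℝ (deriv g) := by
      rw [show (2 : WithTop ℕ∞) = 1 + 1 from rfl, contDiff_succ_iff_deriv] at hg
      exact hg.2.2.differentiable one_ne_zero
    have hnorm : ∀ ρ : ℝ, 0 ≤ ρ →
        ‖ρ • EuclideanSpace.single (⟨0, hN0⟩ : Fin N) (1:ℝ)‖ = ρ := by
      intro ρ hρ; rw [norm_smul_single, abs_of_nonneg hρ]
    have hODE : ∀ ρ ∈ Ioo (1/2:ℝ) 1,
        (fun t => -(deriv (deriv g) t)) ρ + ((N:ℝ)-1) * ((fun t => -(deriv g t)) ρ / ρ)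
          + lam n * (fun t => -(g t)) ρ + ((fun t => -(g t)) ρ) ^ p = 0 := by
      intro ρ hρ
      have hρ0 : (0:ℝ) < ρ := lt_trans (by norm_num) hρ.1
      have hmem : ρ • EuclideanSpace.single (⟨0, hN0⟩ : Fin N) (1:ℝ)
          ∈ ball (0 : EuclideanSpace ℝ (Fin N)) 1 := by
        rw [mem_ball_zero_iff, hnorm ρ hρ0.le]; exact hρ.2
      have hs := hsol n _ hmem
      have hlapeq := lap_radial hN0 (u n) (hreg n) (hrad n) hρ0
      have hgneg : g ρ < 0 := by
        rw [hgdef]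
        exact hneg n _ (by rw [hnorm ρ hρ0.le]; exact lt_trans hrn hρ.1)
          (by rw [hnorm ρ hρ0.le]; exact hρ.2)
      have habs : |g ρ| ^ (p-1) * g ρ = -((-(g ρ)) ^ p) := by
        rw [abs_of_neg hgneg]
        have h0 : (0:ℝ) < -(g ρ) := by linarith
        have hstep : (-(g ρ)) ^ p = (-(g ρ)) ^ (p-1) * (-(g ρ)) := by
          rw [show p = (p-1) + 1 by ring, Real.rpow_add_one h0.ne' (p-1)]
          ring_nf
        rw [hstep]; ring
      have key : -(deriv (deriv g) ρ + ((N:ℝ)-1) * (deriv g ρ / ρ))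
          = lam n * g ρ + |g ρ| ^ (p-1) * g ρ := by
        rw [← hlapeq]; exact hs
      simp only []
      rw [neg_div]
      have hxd : ((N:ℝ)-1) * -(deriv g ρ / ρ) = -(((N:ℝ)-1) * (deriv g ρ / ρ)) := by ring
      rw [hxd]
      linarith [key, habs]
    have hbnd := lam_bound (A := ((N:ℝ)-1)) (q := p) (by linarith) (hlampos n)
      (fun ρ _ => ((hgdiff ρ).hasDerivAt).neg)
      (fun ρ _ => ((hg'diff ρ).hasDerivAt).neg)
      (fun ρ hρ => by
        have hρ0 : (0:ℝ) < ρ := lt_trans (by norm_num) hρ.1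
        have : g ρ < 0 := by
          rw [hgdef]
          exact hneg n _ (by rw [norm_smul_single, abs_of_nonneg hρ0.le]; exact lt_trans hrn hρ.1)
            (by rw [norm_smul_single, abs_of_nonneg hρ0.le]; exact hρ.2)
        simpa using neg_pos.2 this)
      hODE
    rw [hΛdef]
    exact hbnd
  -- the key energy identity
  have henergy : ∀ n, r n < 1/2 → μseq n < ε →
      energy N (lam n) (fun x => max (u n x) 0) = c (μseq n) := by
    intro n hrn hμε
    obtain ⟨hrn0, hrn1⟩ := hrio n
    set rn : ℝ := r n with hrndef
    set q2 : ℝ := 2 * (N : ℝ) / ((N : ℝ) - 2) with hq2def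
    have hN2 : (0:ℝ) < (N:ℝ) - 2 := by linarith
    have hq2pos : 0 < q2 := by
      rw [hq2def]; positivity
    set e : ℝ := ((N:ℝ)-2)/2 with hedef
    set sc : ℝ := rn ^ e with hscdef
    have hsc : 0 < sc := Real.rpow_pos_of_pos hrn0 e
    have hmulpow : ∀ x y : ℝ, rn ^ x * rn ^ y = rn ^ (x+y) :=
      fun x y => (Real.rpow_add hrn0 x y).symm
    have hμeq : μseq n = lam n * rn^2 := rfl
    have hμn : 0 < μseq n := hμpos n
    -- exponent identities
    have hsc2 : sc^2 * rn^2 = rn^(N:ℕ) := by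
      have h1 : sc^2 * rn^2 = rn^e * rn^e * (rn^(1:ℝ) * rn^(1:ℝ)) := by
        rw [hscdef, Real.rpow_one]; ring
      rw [h1, hmulpow, hmulpow, hmulpow, show e + e + (1+1) = ((N:ℕ):ℝ) by
        rw [hedef]; push_cast; ring, Real.rpow_natCast]
    have hscp : sc * rn^2 = sc ^ p := by
      have h1 : sc ^ p = rn ^ (e * p) := by
        rw [hscdef, ← Real.rpow_mul hrn0.le]
      have h2 : sc * rn^2 = rn ^ e * (rn^(1:ℝ) * rn^(1:ℝ)) := by
        rw [hscdef, Real.rpow_one]; ring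
      rw [h1, h2, hmulpow, hmulpow, show e * p = e + (1+1) by
        rw [hedef, hp]; field_simp; ring]
    have hsc2star : sc ^ q2 = rn^(N:ℕ) := by
      rw [hscdef, ← Real.rpow_mul hrn0.le, show e * q2 = ((N:ℕ):ℝ) by
        rw [hedef, hq2def]; push_cast; field_simp, Real.rpow_natCast]
    -- the rescaled function
    set v : EuclideanSpace ℝ (Fin N) → ℝ := fun y => sc * u n (rn • y) with hvdef
    set uplus : EuclideanSpace ℝ (Fin N) → ℝ := fun x => max (u n x) 0 with huplusdef
    have hudiff : Differentiable ℝ (u n) := (hreg n).differentiable two_ne_zero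
    -- annulus facts
    have hann : ∀ x : EuclideanSpace ℝ (Fin N), rn < ‖x‖ → ‖x‖ < 1 →
        gradient uplus x = 0 ∧ uplus x = 0 := by
      intro x h1 h2
      have hopen : IsOpen {y : EuclideanSpace ℝ (Fin N) | rn < ‖y‖ ∧ ‖y‖ < 1} :=
        (isOpen_lt continuous_const continuous_norm).inter
          (isOpen_lt continuous_norm continuous_const)
      have hev : uplus =ᶠ[nhds x] (fun _ => (0:ℝ)) := by
        filter_upwards [hopen.mem_nhds ⟨h1, h2⟩] with y hy
        exact max_eq_right (hneg n y hy.1 hy.2).le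
      exact ⟨by rw [hev.gradient_eq, gradient_fun_const],
        max_eq_right (hneg n x h1 h2).le⟩
    have hball : ∀ x : EuclideanSpace ℝ (Fin N), ‖x‖ < rn →
        gradient uplus x = gradient (u n) x ∧ uplus x = u n x := by
      intro x h1
      have hopen : IsOpen {y : EuclideanSpace ℝ (Fin N) | ‖y‖ < rn} :=
        isOpen_lt continuous_norm continuous_const
      have hev : uplus =ᶠ[nhds x] u n := by
        filter_upwards [hopen.mem_nhds h1] with y hy
        exact max_eq_left (hpos n y hy).le
      exact ⟨hev.gradient_eq, max_eq_left (hpos n x h1).le⟩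
    -- integral identities, u side
    have hI1u : ∫ x in ball (0 : EuclideanSpace ℝ (Fin N)) 1,
          (‖gradient uplus x‖ ^ 2 - lam n * uplus x ^ 2)
        = ∫ x in ball (0 : EuclideanSpace ℝ (Fin N)) rn,
          (‖gradient (u n) x‖ ^ 2 - lam n * u n x ^ 2) := by
      rw [setIntegral_shrink _ hrn0 hrn1 (fun x h1 h2 => by
        rcases hann x h1 h2 with ⟨hg0, hv0⟩
        simp only [hg0, hv0]; simp)]
      apply setIntegral_congr_fun measurableSet_ball
      intro x hx
      rcases hball x (mem_ball_zero_iff.1 hx) with ⟨hg, hv⟩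
      simp only [hg, hv]
    have hI2u : ∫ x in ball (0 : EuclideanSpace ℝ (Fin N)) 1, |uplus x| ^ q2
        = ∫ x in ball (0 : EuclideanSpace ℝ (Fin N)) rn, |u n x| ^ q2 := by
      rw [setIntegral_shrink _ hrn0 hrn1 (fun x h1 h2 => by
        simp only [(hann x h1 h2).2]
        simp [Real.zero_rpow hq2pos.ne'])]
      apply setIntegral_congr_fun measurableSet_ball
      intro x hx
      simp only [(hball x (mem_ball_zero_iff.1 hx)).2]
    -- integral identities, v side
    have hI1v : ∫ y in ball (0 : EuclideanSpace ℝ (Fin N)) 1,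
          (‖gradient v y‖ ^ 2 - μseq n * v y ^ 2)
        = ∫ x in ball (0 : EuclideanSpace ℝ (Fin N)) rn,
          (‖gradient (u n) x‖ ^ 2 - lam n * u n x ^ 2) := by
      have hpt : ∀ y : EuclideanSpace ℝ (Fin N),
          ‖gradient v y‖ ^ 2 - μseq n * v y ^ 2
          = (rn:ℝ)^(N:ℕ) * (‖gradient (u n) (rn • y)‖ ^ 2 - lam n * u n (rn • y) ^ 2) := by
        intro y
        have hgv : gradient v y = (sc * rn) • gradient (u n) (rn • y) :=
          gradient_scale (u n) hudiff sc rn y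
        have hvy : v y = sc * u n (rn • y) := rfl
        rw [hgv, hvy, hμeq, norm_smul, Real.norm_eq_abs, mul_pow, sq_abs]
        rw [← hsc2]
        ring
      rw [setIntegral_congr_fun measurableSet_ball (fun y _ => hpt y)]
      exact setIntegral_ball_smul
        (fun x => ‖gradient (u n) x‖ ^ 2 - lam n * u n x ^ 2) hrn0
    have hI2v : ∫ y in ball (0 : EuclideanSpace ℝ (Fin N)) 1, |v y| ^ q2
        = ∫ x in ball (0 : EuclideanSpace ℝ (Fin N)) rn, |u n x| ^ q2 := by
      have hpt : ∀ y : EuclideanSpace ℝ (Fin N),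
          |v y| ^ q2 = (rn:ℝ)^(N:ℕ) * |u n (rn • y)| ^ q2 := by
        intro y
        have hvy : v y = sc * u n (rn • y) := rfl
        rw [hvy, abs_mul, abs_of_pos hsc, Real.mul_rpow hsc.le (abs_nonneg _), hsc2star]
      rw [setIntegral_congr_fun measurableSet_ball (fun y _ => hpt y)]
      exact setIntegral_ball_smul (fun x => |u n x| ^ q2) hrn0
    -- properties of v
    have hvC2 : ContDiff ℝ 2 v :=
      contDiff_const.mul ((hreg n).comp (contDiff_const.fun_smul contDiff_id))
    have hvrad : ∀ x y : EuclideanSpace ℝ (Fin N), ‖x‖ = ‖y‖ → v x = v y := by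
      intro x y hxy
      have : u n (rn • x) = u n (rn • y) := by
        apply hrad n
        rw [norm_smul, norm_smul, hxy]
      simp only [hvdef, this]
    have hvpos : ∀ y ∈ ball (0 : EuclideanSpace ℝ (Fin N)) 1, 0 < v y := by
      intro y hy
      rw [mem_ball_zero_iff] at hy
      have hxltr : ‖rn • y‖ < rn := by
        rw [norm_smul, Real.norm_eq_abs, abs_of_pos hrn0]
        calc rn * ‖y‖ < rn * 1 := by
              exact mul_lt_mul_of_pos_left hy hrn0
          _ = rn := mul_one rn
      exact mul_pos hsc (hpos n _ hxltr)
    have hvbd : ∀ y : EuclideanSpace ℝ (Fin N), ‖y‖ = 1 → v y = 0 := by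
      intro y hy
      have hnorm : ‖rn • y‖ = rn := by
        rw [norm_smul, Real.norm_eq_abs, abs_of_pos hrn0, hy, mul_one]
      have : u n (rn • y) = 0 :=
        nodal_zero hN0 (hreg n).continuous (hrad n) hrn0 hrn1 (hpos n) (hneg n) _ hnorm
      simp only [hvdef, this, mul_zero]
    have hveq : ∀ y ∈ ball (0 : EuclideanSpace ℝ (Fin N)) 1,
        -lap v y = μseq n * v y + (v y) ^ p := by
      intro y hy
      rw [mem_ball_zero_iff] at hy
      have hxnorm : ‖rn • y‖ = rn * ‖y‖ := by
        rw [norm_smul, Real.norm_eq_abs, abs_of_pos hrn0]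
      have hxltr : ‖rn • y‖ < rn := by
        rw [hxnorm]
        calc rn * ‖y‖ < rn * 1 := mul_lt_mul_of_pos_left hy hrn0
          _ = rn := mul_one rn
      have hxin : rn • y ∈ ball (0 : EuclideanSpace ℝ (Fin N)) 1 :=
        mem_ball_zero_iff.2 (lt_trans hxltr hrn1)
      have hupos : 0 < u n (rn • y) := hpos n _ hxltr
      have hlapv : lap v y = sc * rn^2 * lap (u n) (rn • y) :=
        lap_scale (hreg n) sc rn y
      have hlapval : lap (u n) (rn • y)
          = -(lam n * u n (rn • y) + (u n (rn • y)) ^ p) := by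
        have hs := hsol n _ hxin
        rw [abs_of_pos hupos] at hs
        have h3 := Real.rpow_add_one hupos.ne' (p-1)
        rw [show p - 1 + 1 = p by ring] at h3
        have h2 : u n (rn • y) ^ (p-1) * u n (rn • y) = u n (rn • y) ^ p := h3.symm
        linarith [hs, h2]
      have hvy : v y = sc * u n (rn • y) := rfl
      have hvp : (v y) ^ p = sc * rn^2 * (u n (rn • y)) ^ p := by
        rw [hvy, Real.mul_rpow hsc.le hupos.le, ← hscp]
      rw [hlapv, hlapval, hvp, hvy, hμeq]
      ring
    -- apply hmin
    have hmin_app := hmin (μseq n) hμn hμε v hvC2 hvrad hvpos hvbd hveq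
    have hEeq : energy N (lam n) uplus = energy N (μseq n) v := by
      rw [energy, energy, ← hq2def, hI1u, hI2u, hI1v, hI2v]
    rw [huplusdef] at hEeq
    rw [hEeq]
    exact hmin_app
  -- μseq → 0
  have htendμ : Tendsto μseq atTop (nhds 0) := by
    have hub : ∀ᶠ n in atTop, μseq n ≤ Λ * (r n)^2 := by
      filter_upwards [hr0.eventually_lt_const (by norm_num : (0:ℝ) < 1/2)] with n hn
      exact mul_le_mul_of_nonneg_right (hlam_le n hn) (sq_nonneg _)
    have hlb : ∀ᶠ n in atTop, 0 ≤ μseq n := Eventually.of_forall fun n => (hμpos n).le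
    have htu : Tendsto (fun n => Λ * (r n)^2) atTop (nhds 0) := by
      have : Tendsto (fun n => (r n)^2) atTop (nhds 0) := by
        have := hr0.mul hr0
        simpa [sq] using this
      simpa using tendsto_const_nhds.mul this
    exact squeeze_zero' hlb hub htu
  have htendμ' : Tendsto μseq atTop (nhdsWithin 0 (Set.Ioi 0)) := by
    rw [tendsto_nhdsWithin_iff]
    exact ⟨htendμ, Eventually.of_forall fun n => hμpos n⟩
  have hC : Tendsto (fun n => c (μseq n)) atTop
      (nhds ((1 / (N : ℝ)) * S ^ ((N : ℝ) / 2))) := hc.comp htendμ'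
  apply hC.congr'
  filter_upwards [hr0.eventually_lt_const (by norm_num : (0:ℝ) < 1/2),
    htendμ.eventually_lt_const hε] with n h1 h2
  exact (henergy n h1 h2).symm
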